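/- Closed-loop design separation (necessity): let R = [[A + (1-z)I, B, 0],[0, 0, zM_c],[I, 0, I - zP_c]] and suppose S with first block column [Φx; Φu; S_δx] satisfies S(I - R) = (I - R)S = I. Then [Φx; Φu]·[zI - A, -B]·[P_c; M_c] = [P_c; M_c]. -/

import Mathlib

set_option synthInstance.maxHeartbeats 1000000
set_option maxHeartbeats 1000000

noncomputable section

/-- A 3×3 block matrix. -/
def blk3 {n m p α : Type*}
    (M11 : Matrix n n α) (M12 : Matrix n m α) (M13 : Matrix n p α)
    (M21 : Matrix m n α) (M22 : Matrix m m α) (M23 : Matrix m p α)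
    (M31 : Matrix p n α) (M32 : Matrix p m α) (M33 : Matrix p p α) :
    Matrix (n ⊕ (m ⊕ p)) (n ⊕ (m ⊕ p)) α :=
  Matrix.fromBlocks M11 (Matrix.fromCols M12 M13) (Matrix.fromRows M21 M31)
    (Matrix.fromBlocks M22 M23 M32 M33)

/-- Closed-loop design separation (necessity): for the realization
`R = [[A + (1-z)I, B, 0],[0, 0, zM_c],[I, 0, I - zP_c]]` (internal state `(x, u, δ)`), if `S` is
a two-sided inverse of `I - R` whose first block column is `[Φx; Φu; Sδx]`, then
`[Φx; Φu] [zI - A, -B] [P_c; M_c] = [P_c; M_c]`, i.e. `Φx Δ_c = P_c` and `Φu Δ_c = M_c` with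
`Δ_c = (zI - A) P_c - B M_c`. -/
theorem design_separation_necessity {n m : Type*} [Fintype n] [Fintype m]
    [DecidableEq n] [DecidableEq m]
    (A : Matrix n n ℝ) (B : Matrix n m ℝ)
    (Pc : Matrix n n (RatFunc ℝ)) (Mc : Matrix m n (RatFunc ℝ))
    (Φx : Matrix n n (RatFunc ℝ)) (Φu : Matrix m n (RatFunc ℝ))
    (Sδx : Matrix n n (RatFunc ℝ))
    (R S : Matrix (n ⊕ (m ⊕ n)) (n ⊕ (m ⊕ n)) (RatFunc ℝ))
    (hR : R = blk3
      (A.map (algebraMap ℝ (RatFunc ℝ))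
        + (1 - (RatFunc.X : RatFunc ℝ)) • (1 : Matrix n n (RatFunc ℝ)))
      (B.map (algebraMap ℝ (RatFunc ℝ))) 0
      0 0 ((RatFunc.X : RatFunc ℝ) • Mc)
      (1 : Matrix n n (RatFunc ℝ)) 0
      ((1 : Matrix n n (RatFunc ℝ)) - (RatFunc.X : RatFunc ℝ) • Pc))
    (h1 : S * (1 - R) = 1) (h2 : (1 - R) * S = 1)
    (hcolx : ∀ (i : n) (j : n), S (Sum.inl i) (Sum.inl j) = Φx i j)
    (hcolu : ∀ (i : m) (j : n), S (Sum.inr (Sum.inl i)) (Sum.inl j) = Φu i j)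
    (hcolδ : ∀ (i : n) (j : n), S (Sum.inr (Sum.inr i)) (Sum.inl j) = Sδx i j) :
    Φx * (((RatFunc.X : RatFunc ℝ) • (1 : Matrix n n (RatFunc ℝ))
        - A.map (algebraMap ℝ (RatFunc ℝ))) * Pc
        - B.map (algebraMap ℝ (RatFunc ℝ)) * Mc) = Pc ∧
    Φu * (((RatFunc.X : RatFunc ℝ) • (1 : Matrix n n (RatFunc ℝ))
        - A.map (algebraMap ℝ (RatFunc ℝ))) * Pc
        - B.map (algebraMap ℝ (RatFunc ℝ)) * Mc) = Mc := by
  set A' := A.map (algebraMap ℝ (RatFunc ℝ)) with hA'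
  set B' := B.map (algebraMap ℝ (RatFunc ℝ)) with hB'
  set Z : Matrix n n (RatFunc ℝ) := (RatFunc.X : RatFunc ℝ) • 1 - A' with hZ
  set S12 : Matrix n m (RatFunc ℝ) :=
    Matrix.of fun i j => S (Sum.inl i) (Sum.inr (Sum.inl j)) with hS12
  set S13 : Matrix n n (RatFunc ℝ) :=
    Matrix.of fun i j => S (Sum.inl i) (Sum.inr (Sum.inr j)) with hS13
  set S22 : Matrix m m (RatFunc ℝ) :=
    Matrix.of fun i j => S (Sum.inr (Sum.inl i)) (Sum.inr (Sum.inl j)) with hS22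
  set S23 : Matrix m n (RatFunc ℝ) :=
    Matrix.of fun i j => S (Sum.inr (Sum.inl i)) (Sum.inr (Sum.inr j)) with hS23
  have hE : ∀ a b, ∑ k, S a k * (1 - R) k b
      = (1 : Matrix (n ⊕ (m ⊕ n)) (n ⊕ (m ⊕ n)) (RatFunc ℝ)) a b := by
    intro a b; rw [← Matrix.mul_apply, h1]
  have key : ∀ (a b : n ⊕ (m ⊕ n)),
      ∑ k, S a k * (1 - R) k b
        = (1 : Matrix (n ⊕ (m ⊕ n)) (n ⊕ (m ⊕ n)) (RatFunc ℝ)) a b := hE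
  -- block equations from S * (1 - R) = 1
  have e1 : Φx * Z - S13 = 1 := by
    ext i j
    have h := hE (Sum.inl i) (Sum.inl j)
    simp only [hR, blk3, Fintype.sum_sum_type, Matrix.sub_apply, Matrix.one_apply,
      Matrix.fromBlocks_apply₁₁, Matrix.fromBlocks_apply₁₂, Matrix.fromBlocks_apply₂₁,
      Matrix.fromBlocks_apply₂₂, Matrix.fromRows_apply_inl, Matrix.fromRows_apply_inr,
      Matrix.fromCols_apply_inl, Matrix.fromCols_apply_inr, Matrix.add_apply,
      Matrix.smul_apply, Matrix.zero_apply, hcolx, hcolu,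
      smul_eq_mul, Sum.inl.injEq, Sum.inr.injEq, mul_ite, mul_one, mul_zero, ite_true,
      sub_zero, mul_neg, neg_zero, add_zero, zero_add, reduceCtorEq, if_false] at h
    simp only [Matrix.mul_apply, Matrix.sub_apply, Matrix.smul_apply, Matrix.one_apply,
      Matrix.of_apply, hZ, smul_eq_mul, mul_sub, mul_add, sub_mul, add_mul, mul_ite, ite_mul,
      mul_zero, zero_mul, mul_one, one_mul, Finset.sum_sub_distrib, Finset.sum_add_distrib,
      Finset.sum_ite_eq', Finset.mem_univ, if_true, Finset.sum_const_zero, hS13, hS12,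
      mul_comm, mul_left_comm, mul_assoc] at h ⊢
    ring_nf at h ⊢
    try simp only [mul_comm RatFunc.X, mul_comm (RatFunc.X * _)] at h ⊢
    linear_combination h
  have e2 : S12 = Φx * B' := by
    ext i j
    have h := hE (Sum.inl i) (Sum.inr (Sum.inl j))
    simp only [hR, blk3, Fintype.sum_sum_type, Matrix.sub_apply, Matrix.one_apply,
      Matrix.fromBlocks_apply₁₁, Matrix.fromBlocks_apply₁₂, Matrix.fromBlocks_apply₂₁,
      Matrix.fromBlocks_apply₂₂, Matrix.fromRows_apply_inl, Matrix.fromRows_apply_inr,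
      Matrix.fromCols_apply_inl, Matrix.fromCols_apply_inr, Matrix.add_apply,
      Matrix.smul_apply, Matrix.zero_apply, hcolx, hcolu,
      smul_eq_mul, Sum.inl.injEq, Sum.inr.injEq, mul_ite, mul_one, mul_zero, ite_true,
      sub_zero, mul_neg, neg_zero, add_zero, zero_add, reduceCtorEq, if_false] at h
    simp only [Matrix.mul_apply, Matrix.sub_apply, Matrix.smul_apply, Matrix.one_apply,
      Matrix.of_apply, smul_eq_mul, mul_sub, mul_add, sub_mul, add_mul, mul_ite, ite_mul,
      mul_zero, zero_mul, mul_one, one_mul, Finset.sum_sub_distrib, Finset.sum_add_distrib,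
      Finset.sum_ite_eq', Finset.mem_univ, if_true, Finset.sum_const_zero, hS13, hS12,
      mul_comm, mul_left_comm, mul_assoc] at h ⊢
    ring_nf at h ⊢
    try simp only [mul_comm RatFunc.X, mul_comm (RatFunc.X * _)] at h ⊢
    linear_combination h
  have e3 : -(S12 * ((RatFunc.X : RatFunc ℝ) • Mc)) + S13 * ((RatFunc.X : RatFunc ℝ) • Pc) = 0 := by
    ext i j
    have h := hE (Sum.inl i) (Sum.inr (Sum.inr j))
    simp only [hR, blk3, Fintype.sum_sum_type, Matrix.sub_apply, Matrix.one_apply,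
      Matrix.fromBlocks_apply₁₁, Matrix.fromBlocks_apply₁₂, Matrix.fromBlocks_apply₂₁,
      Matrix.fromBlocks_apply₂₂, Matrix.fromRows_apply_inl, Matrix.fromRows_apply_inr,
      Matrix.fromCols_apply_inl, Matrix.fromCols_apply_inr, Matrix.add_apply,
      Matrix.smul_apply, Matrix.zero_apply, hcolx, hcolu,
      smul_eq_mul, Sum.inl.injEq, Sum.inr.injEq, mul_ite, mul_one, mul_zero, ite_true,
      sub_zero, mul_neg, neg_zero, add_zero, zero_add, reduceCtorEq, if_false] at h
    simp only [Matrix.mul_apply, Matrix.sub_apply, Matrix.neg_apply, Matrix.add_apply,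
      Matrix.smul_apply, Matrix.one_apply,
      Matrix.of_apply, Matrix.zero_apply, smul_eq_mul, mul_sub, mul_add, sub_mul, add_mul,
      mul_ite, ite_mul,
      mul_zero, zero_mul, mul_one, one_mul, Finset.sum_sub_distrib, Finset.sum_add_distrib,
      Finset.sum_ite_eq', Finset.mem_univ, if_true, Finset.sum_const_zero, hS13, hS12,
      mul_comm, mul_left_comm, mul_assoc] at h ⊢
    ring_nf at h ⊢
    try simp only [mul_comm RatFunc.X, mul_comm (RatFunc.X * _)] at h ⊢
    linear_combination h
  have e4 : Φu * Z - S23 = 0 := by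
    ext i j
    have h := hE (Sum.inr (Sum.inl i)) (Sum.inl j)
    simp only [hR, blk3, Fintype.sum_sum_type, Matrix.sub_apply, Matrix.one_apply,
      Matrix.fromBlocks_apply₁₁, Matrix.fromBlocks_apply₁₂, Matrix.fromBlocks_apply₂₁,
      Matrix.fromBlocks_apply₂₂, Matrix.fromRows_apply_inl, Matrix.fromRows_apply_inr,
      Matrix.fromCols_apply_inl, Matrix.fromCols_apply_inr, Matrix.add_apply,
      Matrix.smul_apply, Matrix.zero_apply, hcolx, hcolu,
      smul_eq_mul, Sum.inl.injEq, Sum.inr.injEq, mul_ite, mul_one, mul_zero, ite_true,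
      sub_zero, mul_neg, neg_zero, add_zero, zero_add, reduceCtorEq, if_false] at h
    simp only [Matrix.mul_apply, Matrix.sub_apply, Matrix.smul_apply, Matrix.one_apply,
      Matrix.of_apply, Matrix.zero_apply, hZ, smul_eq_mul, mul_sub, mul_add, sub_mul, add_mul,
      mul_ite, ite_mul,
      mul_zero, zero_mul, mul_one, one_mul, Finset.sum_sub_distrib, Finset.sum_add_distrib,
      Finset.sum_ite_eq', Finset.mem_univ, if_true, Finset.sum_const_zero, hS23, hS22,
      mul_comm, mul_left_comm, mul_assoc] at h ⊢
    ring_nf at h ⊢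
    try simp only [mul_comm RatFunc.X, mul_comm (RatFunc.X * _)] at h ⊢
    linear_combination h
  have e5 : -(Φu * B') + S22 = 1 := by
    ext i j
    have h := hE (Sum.inr (Sum.inl i)) (Sum.inr (Sum.inl j))
    simp only [hR, blk3, Fintype.sum_sum_type, Matrix.sub_apply, Matrix.one_apply,
      Matrix.fromBlocks_apply₁₁, Matrix.fromBlocks_apply₁₂, Matrix.fromBlocks_apply₂₁,
      Matrix.fromBlocks_apply₂₂, Matrix.fromRows_apply_inl, Matrix.fromRows_apply_inr,
      Matrix.fromCols_apply_inl, Matrix.fromCols_apply_inr, Matrix.add_apply,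
      Matrix.smul_apply, Matrix.zero_apply, hcolx, hcolu,
      smul_eq_mul, Sum.inl.injEq, Sum.inr.injEq, mul_ite, mul_one, mul_zero, ite_true,
      sub_zero, mul_neg, neg_zero, add_zero, zero_add, reduceCtorEq, if_false] at h
    simp only [Matrix.mul_apply, Matrix.sub_apply, Matrix.neg_apply, Matrix.add_apply,
      Matrix.smul_apply, Matrix.one_apply,
      Matrix.of_apply, smul_eq_mul, mul_sub, mul_add, sub_mul, add_mul, mul_ite, ite_mul,
      mul_zero, zero_mul, mul_one, one_mul, Finset.sum_sub_distrib, Finset.sum_add_distrib,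
      Finset.sum_ite_eq', Finset.mem_univ, if_true, Finset.sum_const_zero, hS23, hS22,
      mul_comm, mul_left_comm, mul_assoc] at h ⊢
    ring_nf at h ⊢
    try simp only [mul_comm RatFunc.X, mul_comm (RatFunc.X * _)] at h ⊢
    linear_combination h
  have e6 : -(S22 * ((RatFunc.X : RatFunc ℝ) • Mc)) + S23 * ((RatFunc.X : RatFunc ℝ) • Pc) = 0 := by
    ext i j
    have h := hE (Sum.inr (Sum.inl i)) (Sum.inr (Sum.inr j))
    simp only [hR, blk3, Fintype.sum_sum_type, Matrix.sub_apply, Matrix.one_apply,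
      Matrix.fromBlocks_apply₁₁, Matrix.fromBlocks_apply₁₂, Matrix.fromBlocks_apply₂₁,
      Matrix.fromBlocks_apply₂₂, Matrix.fromRows_apply_inl, Matrix.fromRows_apply_inr,
      Matrix.fromCols_apply_inl, Matrix.fromCols_apply_inr, Matrix.add_apply,
      Matrix.smul_apply, Matrix.zero_apply, hcolx, hcolu,
      smul_eq_mul, Sum.inl.injEq, Sum.inr.injEq, mul_ite, mul_one, mul_zero, ite_true,
      sub_zero, mul_neg, neg_zero, add_zero, zero_add, reduceCtorEq, if_false] at h
    simp only [Matrix.mul_apply, Matrix.sub_apply, Matrix.neg_apply, Matrix.add_apply,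
      Matrix.smul_apply, Matrix.one_apply,
      Matrix.of_apply, Matrix.zero_apply, smul_eq_mul, mul_sub, mul_add, sub_mul, add_mul,
      mul_ite, ite_mul,
      mul_zero, zero_mul, mul_one, one_mul, Finset.sum_sub_distrib, Finset.sum_add_distrib,
      Finset.sum_ite_eq', Finset.mem_univ, if_true, Finset.sum_const_zero, hS23, hS22,
      mul_comm, mul_left_comm, mul_assoc] at h ⊢
    ring_nf at h ⊢
    try simp only [mul_comm RatFunc.X, mul_comm (RatFunc.X * _)] at h ⊢
    linear_combination h
  constructor
  · -- Φx part
    have hS13' : S13 = Φx * Z - 1 := by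
      rw [sub_eq_iff_eq_add] at e1
      rw [e1]; abel
    have keyx : (RatFunc.X : RatFunc ℝ) • (Φx * (Z * Pc - B' * Mc) - Pc) = 0 := by
      rw [hS13', e2] at e3
      calc (RatFunc.X : RatFunc ℝ) • (Φx * (Z * Pc - B' * Mc) - Pc)
          = -(Φx * B' * ((RatFunc.X : RatFunc ℝ) • Mc)) + (Φx * Z - 1) * ((RatFunc.X : RatFunc ℝ) • Pc) := by
            simp [Matrix.mul_smul, Matrix.mul_sub, Matrix.sub_mul, smul_sub, Matrix.mul_assoc]
            abel
        _ = 0 := e3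
    have h0 := (smul_eq_zero.mp keyx).resolve_left RatFunc.X_ne_zero
    exact sub_eq_zero.mp h0
  · -- Φu part
    have hS23' : S23 = Φu * Z := by
      rw [sub_eq_zero] at e4; rw [e4]
    have hS22' : S22 = 1 + Φu * B' := by
      rw [neg_add_eq_iff_eq_add] at e5
      rw [e5]; abel
    have keyu : (RatFunc.X : RatFunc ℝ) • (Φu * (Z * Pc - B' * Mc) - Mc) = 0 := by
      rw [hS22', hS23'] at e6
      calc (RatFunc.X : RatFunc ℝ) • (Φu * (Z * Pc - B' * Mc) - Mc)
          = -((1 + Φu * B') * ((RatFunc.X : RatFunc ℝ) • Mc)) + Φu * Z * ((RatFunc.X : RatFunc ℝ) • Pc) := by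
            simp [Matrix.mul_smul, Matrix.mul_sub, Matrix.sub_mul, Matrix.add_mul, smul_sub,
              Matrix.mul_assoc]
            abel
        _ = 0 := e6
    have h0 := (smul_eq_zero.mp keyu).resolve_left RatFunc.X_ne_zero
    exact sub_eq_zero.mp h0
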